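/- Let k ≥ 2 be an integer. If τ is a symmetric polynomial matrix whose entries have total degree at most k−1 and rot τ = 0, then there exists a polynomial q of total degree at most k+1 such that τ = ∇²q, the Hessian matrix of q. -/

import Mathlib

open MvPolynomial Matrix

/-- Real polynomials in two variables. -/
abbrev P2 := MvPolynomial (Fin 2) ℝ

/-- The matrix `curl v` of a polynomial vector field, defined row-wise:
`(curl v)_{i1} = ∂₂ vᵢ`, `(curl v)_{i2} = -∂₁ vᵢ`. -/
noncomputable def pcurl (v : Fin 2 → P2) : Matrix (Fin 2) (Fin 2) P2 :=
  Matrix.of fun i j =>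
    if j = 0 then pderiv (1 : Fin 2) (v i) else -(pderiv (0 : Fin 2) (v i))

/-- `sym curl v := (curl v + (curl v)ᵀ)/2`. -/
noncomputable def psymCurl (v : Fin 2 → P2) : Matrix (Fin 2) (Fin 2) P2 :=
  (1 / 2 : ℝ) • (pcurl v + (pcurl v)ᵀ)

/-- `div div τ := Σ_{i,j} ∂ᵢ∂ⱼ τ_{ij}`. -/
noncomputable def pdivDiv (τ : Matrix (Fin 2) (Fin 2) P2) : P2 :=
  ∑ i : Fin 2, ∑ j : Fin 2, pderiv i (pderiv j (τ i j))

/-- The matrix `x xᵀ q` with `(i,j)`-entry `Xᵢ · Xⱼ · q`. -/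
noncomputable def xxT (q : P2) : Matrix (Fin 2) (Fin 2) P2 :=
  Matrix.of fun i j => X i * X j * q

/-- The polynomial vector `x^⊥ = (X₂, -X₁)`. -/
noncomputable def xPerp : Fin 2 → P2 := ![X 1, -X 0]

/-- `rot τ`, with components `(rot τ)ᵢ = ∂₁ τ_{i2} - ∂₂ τ_{i1}`. -/
noncomputable def prot (τ : Matrix (Fin 2) (Fin 2) P2) : Fin 2 → P2 :=
  fun i => pderiv (0 : Fin 2) (τ i 1) - pderiv (1 : Fin 2) (τ i 0)

/-- The Hessian matrix `∇²q` with entries `∂ᵢ∂ⱼ q`. -/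
noncomputable def phess (q : P2) : Matrix (Fin 2) (Fin 2) P2 :=
  Matrix.of fun i j => pderiv i (pderiv j q)

/-- `sym(x^⊥ ⊗ v)`, the symmetric matrix with `(i,j)`-entry
`((x^⊥)ᵢ vⱼ + vᵢ (x^⊥)ⱼ)/2`. -/
noncomputable def symTen (v : Fin 2 → P2) : Matrix (Fin 2) (Fin 2) P2 :=
  Matrix.of fun i j => (1 / 2 : ℝ) • (xPerp i * v j + v i * xPerp j)

/-- The gradient matrix `∇v` with entries `(∇v)_{ij} = ∂ⱼ vᵢ`. -/
noncomputable def pgrad (v : Fin 2 → P2) : Matrix (Fin 2) (Fin 2) P2 :=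
  Matrix.of fun i j => pderiv j (v i)

/-- The symmetric gradient `def v := (∇v + (∇v)ᵀ)/2`. -/
noncomputable def pdef (v : Fin 2 → P2) : Matrix (Fin 2) (Fin 2) P2 :=
  (1 / 2 : ℝ) • (pgrad v + (pgrad v)ᵀ)

/-- The matrix `x^⊥ (x^⊥)ᵀ q` with `(i,j)`-entry `(x^⊥)ᵢ (x^⊥)ⱼ q`. -/
noncomputable def xPerpxPerpT (q : P2) : Matrix (Fin 2) (Fin 2) P2 :=
  Matrix.of fun i j => xPerp i * xPerp j * q

/-- `rot rot τ := ∂₁(rot τ)₂ − ∂₂(rot τ)₁`. -/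
noncomputable def protRot (τ : Matrix (Fin 2) (Fin 2) P2) : P2 :=
  pderiv (0 : Fin 2) (prot τ 1) - pderiv (1 : Fin 2) (prot τ 0)

noncomputable def integ (i : Fin 2) : P2 →ₗ[ℝ] P2 :=
  (Finsupp.lsum ℝ fun m : Fin 2 →₀ ℕ =>
    (monomial (m + Finsupp.single i 1) : ℝ →ₗ[ℝ] P2).comp
      (LinearMap.mulLeft ℝ ((m i + 1 : ℝ)⁻¹))) ∘ₗ
    (AddMonoidAlgebra.coeffLinearEquiv ℝ).toLinearMap

lemma integ_monomial (i : Fin 2) (m : Fin 2 →₀ ℕ) (c : ℝ) :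
    integ i (monomial m c) = monomial (m + Finsupp.single i 1) ((m i + 1 : ℝ)⁻¹ * c) := by
  have : (AddMonoidAlgebra.coeffLinearEquiv ℝ) (monomial m c : P2) = Finsupp.single m c := by
    ext n; change MvPolynomial.coeff n (monomial m c) = _; simp [coeff_monomial, Finsupp.single_apply]
  simp [integ, this]

lemma pderiv_integ_self (i : Fin 2) (p : P2) : pderiv i (integ i p) = p := by
  induction p using MvPolynomial.induction_on' with
  | monomial m c =>
    rw [integ_monomial, pderiv_monomial]
    have h1 : (m + Finsupp.single i 1 : Fin 2 →₀ ℕ) i = m i + 1 := by simp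
    have h2 : m + Finsupp.single i 1 - Finsupp.single i 1 = m := add_tsub_cancel_right _ _
    rw [h1, h2]
    congr 1
    have : (m i : ℝ) + 1 ≠ 0 := by positivity
    push_cast
    field_simp
  | add p q hp hq => rw [map_add, map_add, hp, hq]

lemma pderiv_integ_comm {i j : Fin 2} (h : j ≠ i) (p : P2) :
    pderiv j (integ i p) = integ i (pderiv j p) := by
  induction p using MvPolynomial.induction_on' with
  | monomial m c =>
    rw [integ_monomial, pderiv_monomial, pderiv_monomial, integ_monomial]
    have h1 : (m + Finsupp.single i 1 : Fin 2 →₀ ℕ) j = m j := by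
      simp [Finsupp.single_apply, (Ne.symm h : i ≠ j)]
    have h2 : (m - Finsupp.single j 1 : Fin 2 →₀ ℕ) i = m i := by
      simp [Finsupp.tsub_apply, Finsupp.single_apply, h]
    have h3 : m + Finsupp.single i 1 - Finsupp.single j 1
        = m - Finsupp.single j 1 + Finsupp.single i 1 := by
      refine Finsupp.ext fun a => ?_
      simp only [Finsupp.add_apply, Finsupp.tsub_apply, Finsupp.single_apply]
      split_ifs with hi hj hj <;> first
        | omega
        | exact absurd (hj.trans hi.symm) h
    rw [h1, h2, h3]
    congr 1
    ring
  | add p q hp hq => rw [map_add, map_add, hp, hq, ← map_add, ← map_add]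

lemma totalDegree_integ_le (i : Fin 2) (p : P2) :
    (integ i p).totalDegree ≤ p.totalDegree + 1 := by
  conv_lhs => rw [p.as_sum, map_sum]
  refine (totalDegree_finset_sum _ _).trans (Finset.sup_le fun m hm => ?_)
  rw [integ_monomial]
  refine (totalDegree_monomial_le _ _).trans ?_
  rw [Finsupp.sum_add_index' (fun _ => rfl) (fun _ _ _ => rfl),
    Finsupp.sum_single_index rfl]
  exact add_le_add_left (le_totalDegree hm) 1

lemma totalDegree_pderiv_le (i : Fin 2) (p : P2) :
    (pderiv i p).totalDegree ≤ p.totalDegree - 1 := by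
  conv_lhs => rw [p.as_sum, map_sum]
  refine (totalDegree_finset_sum _ _).trans (Finset.sup_le fun m hm => ?_)
  rw [pderiv_monomial]
  rcases Nat.eq_zero_or_pos (m i) with h0 | h0
  · simp [h0]
  · refine (totalDegree_monomial_le _ _).trans ?_
    have hle : Finsupp.single i 1 ≤ m := by
      rw [Finsupp.single_le_iff]; exact h0
    have : (m - Finsupp.single i 1).sum (fun _ => id) + 1 = m.sum fun _ => id := by
      conv_rhs => rw [← tsub_add_cancel_of_le hle]
      rw [Finsupp.sum_add_index' (fun _ => rfl) (fun _ _ _ => rfl),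
        Finsupp.sum_single_index rfl]
      rfl
    have h2 := le_totalDegree hm
    simp only [Function.id_def] at this ⊢
    omega

lemma poincare (f g : P2) (hc : pderiv 0 g = pderiv 1 f) :
    ∃ q : P2, pderiv 0 q = f ∧ pderiv 1 q = g ∧
      q.totalDegree ≤ max f.totalDegree g.totalDegree + 1 := by
  set r : P2 := g - pderiv 1 (integ 0 f) with hr
  have h10 : (1 : Fin 2) ≠ 0 := by decide
  have h01 : (0 : Fin 2) ≠ 1 := by decide
  have hr0 : pderiv 0 r = 0 := by
    rw [hr, map_sub, hc, pderiv_integ_comm h10, pderiv_integ_self, sub_self]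
  refine ⟨integ 0 f + integ 1 r, ?_, ?_, ?_⟩
  · rw [map_add, pderiv_integ_self, pderiv_integ_comm h01, hr0, map_zero, add_zero]
  · rw [map_add, pderiv_integ_self, hr]; ring
  · refine (totalDegree_add _ _).trans (max_le ?_ ?_)
    · exact (totalDegree_integ_le _ _).trans (by omega)
    · refine (totalDegree_integ_le _ _).trans ?_
      have h1 : r.totalDegree ≤ max g.totalDegree f.totalDegree := by
        refine (totalDegree_sub _ _).trans (max_le (le_max_left _ _) ?_)
        refine le_trans ((totalDegree_pderiv_le _ _).trans ?_) (le_max_right _ _)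
        have := totalDegree_integ_le 0 f
        omega
      omega
/-- A symmetric polynomial matrix of degree ≤ k−1 with `rot τ = 0` is the
Hessian of a polynomial of degree ≤ k+1. -/
theorem stmt_12 (k : ℕ) (hk : 2 ≤ k) (τ : Matrix (Fin 2) (Fin 2) P2)
    (hsym : τᵀ = τ) (hdeg : ∀ i j, (τ i j).totalDegree ≤ k - 1)
    (h : prot τ = 0) :
    ∃ q : P2, q.totalDegree ≤ k + 1 ∧ τ = phess q := by
  have hrow : ∀ i, pderiv 0 (τ i 1) = pderiv 1 (τ i 0) := by
    intro i
    have h1 := congrFun h i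
    simp only [prot, Pi.zero_apply] at h1
    exact sub_eq_zero.mp h1
  obtain ⟨v0, hv00, hv01, hd0⟩ := poincare (τ 0 0) (τ 0 1) (hrow 0)
  obtain ⟨v1, hv10, hv11, hd1⟩ := poincare (τ 1 0) (τ 1 1) (hrow 1)
  have hsym01 : τ 1 0 = τ 0 1 := by
    have h2 := congrFun (congrFun hsym 0) 1
    simpa [Matrix.transpose_apply] using h2
  have hc2 : pderiv 0 v1 = pderiv 1 v0 := by rw [hv10, hsym01, ← hv01]
  obtain ⟨q, hq0, hq1, hdq⟩ := poincare v0 v1 hc2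
  refine ⟨q, ?_, ?_⟩
  · have b0 : v0.totalDegree ≤ k := by
      have m1 := max_le (hdeg 0 0) (hdeg 0 1)
      omega
    have b1 : v1.totalDegree ≤ k := by
      have m1 := max_le (hdeg 1 0) (hdeg 1 1)
      omega
    have m2 := max_le b0 b1
    omega
  · have hder : ∀ i j : Fin 2, pderiv i (pderiv j q) = τ i j := by
      intro i j
      fin_cases i <;> fin_cases j
      · show pderiv (0 : Fin 2) (pderiv (0 : Fin 2) q) = τ 0 0
        rw [hq0, hv00]
      · show pderiv (0 : Fin 2) (pderiv (1 : Fin 2) q) = τ 0 1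
        rw [hq1, hv10, hsym01]
      · show pderiv (1 : Fin 2) (pderiv (0 : Fin 2) q) = τ 1 0
        rw [hq0, hv01, hsym01]
      · show pderiv (1 : Fin 2) (pderiv (1 : Fin 2) q) = τ 1 1
        rw [hq1, hv11]
    funext i j
    exact (hder i j).symm
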